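/- arXiv:2305.09619 — 5 statements merged into one kernel-verified Lean document; each statement's English description precedes it below -/
import Mathlib

section
/- Let f: V → ℝ^{d₂} be a C¹ map on V ⊆ ℝ^{d₁}, let v: [0,1] → V be a C¹ curve, let ‖·‖ be a norm on ℝ^{d₂}, and suppose there are constants c > 0 and p > 1 such that ‖(d/ds) f(v(s))‖ ≤ c·max{‖f(v(s))‖, ‖f(v(0))‖}^p for all s ∈ [0,1]. If α := c(p−1)‖f(v(0))‖^{p−1} < 1, then for all s ∈ [0,1], ‖f(v(s))‖ ≤ (1−α)^{−1/(p−1)} ‖f(v(0))‖. -/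
open Set

/-- Self-bounding ODE method (variant of Corollary 3 in Simchowitz–Foster):
if the derivative of `s ↦ f (v s)` is bounded by
`c · max{‖f(v(s))‖, ‖f(v(0))‖}^p` with `p > 1`, and
`α = c (p−1) ‖f(v(0))‖^{p−1} < 1`, then
`‖f(v(s))‖ ≤ (1−α)^{−1/(p−1)} ‖f(v(0))‖` on `[0,1]`. -/
theorem self_bounding_ode
    {d₁ : ℕ} {F : Type*} [NormedAddCommGroup F] [NormedSpace ℝ F]
    (V : Set (EuclideanSpace ℝ (Fin d₁)))
    (f : EuclideanSpace ℝ (Fin d₁) → F) (v : ℝ → EuclideanSpace ℝ (Fin d₁))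
    (hf : ContDiffOn ℝ 1 f V) (hv : ContDiffOn ℝ 1 v (Icc 0 1))
    (hmem : MapsTo v (Icc 0 1) V)
    (c p : ℝ) (hc : 0 < c) (hp : 1 < p)
    (hbound : ∀ s ∈ Icc (0:ℝ) 1,
      ‖derivWithin (fun s => f (v s)) (Icc 0 1) s‖
        ≤ c * max ‖f (v s)‖ ‖f (v 0)‖ ^ p)
    (α : ℝ) (hα : α = c * (p - 1) * ‖f (v 0)‖ ^ (p - 1)) (hα1 : α < 1) :
    ∀ s ∈ Icc (0:ℝ) 1,
      ‖f (v s)‖ ≤ (1 - α) ^ (-(1 / (p - 1))) * ‖f (v 0)‖ := by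
  intro s hs
  set M : ℝ := ‖f (v 0)‖ with hM
  set q : ℝ := -(1 / (p - 1)) with hq
  have hp1 : (0:ℝ) < p - 1 := by linarith
  have hqneg : q ≤ 0 := by
    rw [hq]
    simp only [neg_nonpos]
    positivity
  have hMnn : 0 ≤ M := norm_nonneg _
  have hα0 : 0 ≤ α := by
    rw [hα]; positivity
  -- The function g and its derivative
  set g : ℝ → F := fun s => f (v s) with hg
  have hgC : ContDiffOn ℝ 1 g (Icc 0 1) := hf.comp hv hmem
  have hgcont : ContinuousOn g (Icc 0 1) := hgC.continuousOn
  have hgdiff : DifferentiableOn ℝ g (Icc 0 1) := hgC.differentiableOn one_ne_zero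
  have hgderiv : ∀ x ∈ Ico (0:ℝ) 1,
      HasDerivWithinAt g (derivWithin g (Icc 0 1) x) (Ici x) x := by
    intro x hx
    have h1 : HasDerivWithinAt g (derivWithin g (Icc 0 1) x) (Icc 0 1) x :=
      (hgdiff x ⟨hx.1, hx.2.le⟩).hasDerivWithinAt
    refine h1.mono_of_mem_nhdsWithin ?_
    exact Filter.mem_of_superset (Icc_mem_nhdsGE_of_mem ⟨le_refl x, hx.2⟩)
      (Icc_subset_Icc hx.1 le_rfl)
  -- Key estimate with enlarged constants
  have key : ∀ c' M' : ℝ, c < c' → M < M' → c' * (p - 1) * M' ^ (p - 1) < 1 →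
      ‖g s‖ ≤ M' * (1 - c' * (p - 1) * M' ^ (p - 1)) ^ q := by
    intro c' M' hcc hMM hα'
    set α' : ℝ := c' * (p - 1) * M' ^ (p - 1) with hα'def
    have hM' : 0 < M' := lt_of_le_of_lt hMnn hMM
    have hc' : 0 < c' := lt_trans hc hcc
    have hα'0 : 0 ≤ α' := by rw [hα'def]; positivity
    have hbase : ∀ x ∈ Icc (0:ℝ) 1, 0 < 1 - α' * x := by
      intro x hx
      nlinarith [hx.1, hx.2]
    set B : ℝ → ℝ := fun x => M' * (1 - α' * x) ^ q with hB
    set B' : ℝ → ℝ := fun x => M' * (q * (1 - α' * x) ^ (q - 1) * (-α')) with hB'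
    have hBderiv : ∀ x ∈ Icc (0:ℝ) 1, HasDerivAt B (B' x) x := by
      intro x hx
      have h1 : HasDerivAt (fun x : ℝ => 1 - α' * x) (-α') x := by
        simpa using ((hasDerivAt_id x).const_mul α').const_sub 1
      have h2 : HasDerivAt (fun y : ℝ => y ^ q) (q * (1 - α' * x) ^ (q - 1)) (1 - α' * x) :=
        Real.hasDerivAt_rpow_const (Or.inl (hbase x hx).ne')
      exact ((h2.comp x h1).const_mul M')
    have hBcont : ContinuousOn B (Icc 0 1) := by
      intro x hx
      exact ((hBderiv x hx).continuousAt).continuousWithinAt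
    have hBge : ∀ x ∈ Icc (0:ℝ) 1, M' ≤ B x := by
      intro x hx
      have h1 : 1 ≤ (1 - α' * x) ^ q :=
        Real.one_le_rpow_of_pos_of_le_one_of_nonpos (hbase x hx)
          (by nlinarith [hx.1]) hqneg
      calc M' = M' * 1 := (mul_one _).symm
        _ ≤ M' * (1 - α' * x) ^ q := by
            exact mul_le_mul_of_nonneg_left h1 hM'.le
    have hB'eq : ∀ x ∈ Icc (0:ℝ) 1, B' x = c' * (B x) ^ p := by
      intro x hx
      have ht : 0 < 1 - α' * x := hbase x hx
      have hqp : q * p = q - 1 := by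
        rw [hq]; field_simp; ring
      have e1 : (B x) ^ p = M' ^ p * (1 - α' * x) ^ (q - 1) := by
        rw [hB]
        rw [Real.mul_rpow hM'.le (Real.rpow_nonneg ht.le q)]
        rw [← Real.rpow_mul ht.le, hqp]
      have e2 : M' * (α' / (p - 1)) = c' * M' ^ p := by
        rw [hα'def]
        have : c' * (p - 1) * M' ^ (p - 1) / (p - 1) = c' * M' ^ (p - 1) := by
          field_simp
        rw [this]
        have : M' ^ (p - 1) * M' = M' ^ p := by
          nth_rewrite 2 [← Real.rpow_one M']
          rw [← Real.rpow_add hM']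
          norm_num
        nlinarith [this]
      have e3 : B' x = M' * (α' / (p - 1)) * (1 - α' * x) ^ (q - 1) := by
        rw [hB', hq]
        field_simp
      rw [e3, e2, e1]; ring
    have fence : ∀ ⦃x⦄, x ∈ Icc (0:ℝ) 1 → ‖g x‖ ≤ B x := by
      refine image_norm_le_of_norm_deriv_right_lt_deriv_boundary' hgcont hgderiv ?_ hBcont
        (fun x hx => (hBderiv x ⟨hx.1, hx.2.le⟩).hasDerivWithinAt) ?_
      · have : B 0 = M' := by
          rw [hB]; simp [Real.rpow_natCast]
        rw [this]
        exact le_of_lt hMM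
      · intro x hx hEq
        have hx' : x ∈ Icc (0:ℝ) 1 := ⟨hx.1, hx.2.le⟩
        have hBpos : 0 < B x := lt_of_lt_of_le hM' (hBge x hx')
        have hmax : max ‖g x‖ M = B x := by
          rw [hEq]
          exact max_eq_left (le_trans hMM.le (hEq ▸ hBge x hx'))
        calc ‖derivWithin g (Icc 0 1) x‖ ≤ c * max ‖g x‖ M ^ p := hbound x hx'
          _ = c * (B x) ^ p := by rw [hmax]
          _ < c' * (B x) ^ p := by
              exact mul_lt_mul_of_pos_right hcc (Real.rpow_pos_of_pos hBpos p)
          _ = B' x := (hB'eq x hx').symm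
    have h1 : ‖g s‖ ≤ B s := fence hs
    refine h1.trans ?_
    rw [hB]
    refine mul_le_mul_of_nonneg_left ?_ hM'.le
    refine Real.rpow_le_rpow_of_nonpos ?_ ?_ hqneg
    · nlinarith
    · nlinarith [hs.1, hs.2]
  -- Pass to the limit ε → 0⁺
  set h : ℝ → ℝ := fun ε =>
    (M + ε) * (1 - (c + ε) * (p - 1) * (M + ε) ^ (p - 1)) ^ q with hh
  have hαcont : ContinuousAt (fun ε => (c + ε) * (p - 1) * (M + ε) ^ (p - 1)) 0 := by
    have h1 : ContinuousAt (fun ε : ℝ => (M + ε) ^ (p - 1)) 0 := by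
      refine ContinuousAt.rpow_const (by fun_prop) (Or.inr hp1.le)
    fun_prop
  have hhcont : ContinuousAt h 0 := by
    refine ContinuousAt.mul (by fun_prop) ?_
    refine ContinuousAt.rpow_const ?_ ?_
    · exact (continuousAt_const.sub hαcont)
    · left
      show (1:ℝ) - (c + 0) * (p - 1) * (M + 0) ^ (p - 1) ≠ 0
      simp only [add_zero, ← hα]
      intro hcontra
      have : α = 1 := by linarith
      linarith
  have hh0 : h 0 = (1 - α) ^ q * M := by
    rw [hh]
    simp only [add_zero]
    rw [← hα]
    ring
  have hev : ∀ᶠ ε in nhdsWithin 0 (Ioi 0), ‖g s‖ ≤ h ε := by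
    have hsmall : ∀ᶠ ε in nhdsWithin 0 (Ioi 0),
        (c + ε) * (p - 1) * (M + ε) ^ (p - 1) < 1 := by
      have : ∀ᶠ ε in nhds (0:ℝ), (c + ε) * (p - 1) * (M + ε) ^ (p - 1) < 1 := by
        have := hαcont.eventually_lt (continuousAt_const (y := (1:ℝ)))
          (by show (c + 0) * (p - 1) * (M + 0) ^ (p - 1) < 1; simpa [← hα] using hα1)
        simpa using this
      exact this.filter_mono nhdsWithin_le_nhds
    filter_upwards [hsmall, self_mem_nhdsWithin] with ε h1 h2
    exact key (c + ε) (M + ε) (by linarith [mem_Ioi.mp h2]) (by linarith [mem_Ioi.mp h2]) h1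
  have hfin := ge_of_tendsto (hhcont.tendsto.mono_left nhdsWithin_le_nhds) hev
  rw [hh0] at hfin
  exact hfin
end

section
/- Let A, B be Hilbert spaces, let T, W: A → B, L: B → B, K: B → A be bounded linear operators, and let I_A be the identity on A. Define σ_min(L) := inf_{b : ‖b‖_B = 1} ‖L b‖_B. If ‖W‖_op ≤ min{1, σ_min(L)} / (4‖K‖_op), then for every a ∈ A, ‖(L∘T + W)[a]‖_B² + ‖(I_A + K∘T)[a]‖_A² ≥ ‖a‖_A² · min{1, σ_min(L)²} / (16·max{1, ‖K‖_op²}). -/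
set_option maxHeartbeats 1600000 in
/-- PSD lower bound in Hilbert spaces: if `‖W‖ ≤ min{1, σ_min(L)}/(4‖K‖)`, then for all `a`,
`‖(L∘T + W)a‖² + ‖(I + K∘T)a‖² ≥ ‖a‖² · min{1, σ_min(L)²}/(16 max{1, ‖K‖²})`. -/
theorem hilbert_psd_lower_bound {A B : Type*}
    [NormedAddCommGroup A] [InnerProductSpace ℝ A] [CompleteSpace A]
    [NormedAddCommGroup B] [InnerProductSpace ℝ B] [CompleteSpace B]
    (T W : A →L[ℝ] B) (L : B →L[ℝ] B) (K : B →L[ℝ] A)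
    (σmin : ℝ) (hσ : σmin = sInf ((fun b => ‖L b‖) '' {b : B | ‖b‖ = 1}))
    (hW : ‖W‖ ≤ min 1 σmin / (4 * ‖K‖)) :
    ∀ a : A,
      ‖a‖ ^ 2 * min 1 (σmin ^ 2) / (16 * max 1 (‖K‖ ^ 2))
        ≤ ‖(L.comp T + W) a‖ ^ 2
            + ‖(ContinuousLinearMap.id ℝ A + K.comp T) a‖ ^ 2 := by
  intro a
  have hK0 : (0:ℝ) ≤ ‖K‖ := norm_nonneg _
  have hσ0 : 0 ≤ σmin := by
    rw [hσ]
    rcases Set.eq_empty_or_nonempty ((fun b => ‖L b‖) '' {b : B | ‖b‖ = 1}) with h | h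
    · simp [h, Real.sInf_empty]
    · exact Real.sInf_nonneg (by rintro x ⟨b, _, rfl⟩; exact norm_nonneg _)
  have hmin0 : 0 ≤ min 1 σmin := le_min zero_le_one hσ0
  have hLlow : ∀ b : B, σmin * ‖b‖ ≤ ‖L b‖ := by
    intro b
    rcases eq_or_ne b 0 with rfl | hb
    · simp
    · have hbn : (0:ℝ) < ‖b‖ := norm_pos_iff.mpr hb
      have hbdd : BddBelow ((fun b => ‖L b‖) '' {b : B | ‖b‖ = 1}) :=
        ⟨0, by rintro x ⟨b, _, rfl⟩; exact norm_nonneg _⟩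
      have hmem : ‖L ((‖b‖)⁻¹ • b)‖ ∈ (fun b => ‖L b‖) '' {b : B | ‖b‖ = 1} :=
        ⟨(‖b‖)⁻¹ • b, by simp [norm_smul, abs_of_nonneg (le_of_lt hbn),
          inv_mul_cancel₀ (ne_of_gt hbn)], rfl⟩
      have h1 : σmin ≤ ‖L ((‖b‖)⁻¹ • b)‖ := hσ ▸ csInf_le hbdd hmem
      have h2 : ‖L ((‖b‖)⁻¹ • b)‖ = (‖b‖)⁻¹ * ‖L b‖ := by
        rw [map_smul, norm_smul, norm_inv, norm_norm]
      rw [h2] at h1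
      have := mul_le_mul_of_nonneg_right h1 (le_of_lt hbn)
      rw [mul_comm σmin ‖b‖] at this ⊢
      calc ‖b‖ * σmin ≤ (‖b‖)⁻¹ * ‖L b‖ * ‖b‖ := this
        _ = ‖L b‖ := by field_simp
  have hmin_sq : min 1 (σmin ^ 2) = (min 1 σmin) ^ 2 := by
    rcases le_total σmin 1 with h | h
    · rw [min_eq_right h, min_eq_right (by nlinarith)]
    · rw [min_eq_left h, min_eq_left (by nlinarith), one_pow]
  have hmax_sq : max 1 (‖K‖ ^ 2) = (max 1 ‖K‖) ^ 2 := by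
    rcases le_total ‖K‖ 1 with h | h
    · rw [max_eq_left (by nlinarith), max_eq_left h, one_pow]
    · rw [max_eq_right (by nlinarith), max_eq_right h]
  have hmax1 : (1:ℝ) ≤ max 1 ‖K‖ := le_max_left _ _
  have hKmax : ‖K‖ ≤ max 1 ‖K‖ := le_max_right _ _
  have hgoal1 : ‖(L.comp T + W) a‖ = ‖L (T a) + W a‖ := by
    simp [ContinuousLinearMap.add_apply]
  have hgoal2 : ‖(ContinuousLinearMap.id ℝ A + K.comp T) a‖ = ‖a + K (T a)‖ := by
    simp [ContinuousLinearMap.add_apply]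
  rw [hgoal1, hgoal2, hmin_sq, hmax_sq]
  set m := min 1 σmin with hm
  have hm1 : m ≤ 1 := min_le_left _ _
  have hmσ : m ≤ σmin := min_le_right _ _
  by_cases hcase : ‖K‖ * ‖T a‖ ≤ ‖a‖ / 2
  · -- second term dominates
    have hKT : ‖K (T a)‖ ≤ ‖a‖ / 2 := le_trans (K.le_opNorm (T a)) hcase
    have h1 : ‖a‖ / 2 ≤ ‖a + K (T a)‖ := by
      have := norm_add_le (a + K (T a)) (-(K (T a)))
      simp only [add_neg_cancel_right, norm_neg] at this
      linarith
    have h2 : (‖a‖ / 2) ^ 2 ≤ ‖a + K (T a)‖ ^ 2 := by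
      have h0 : (0:ℝ) ≤ ‖a‖ / 2 := by positivity
      nlinarith
    have hfrac : ‖a‖ ^ 2 * m ^ 2 / (16 * (max 1 ‖K‖) ^ 2) ≤ (‖a‖ / 2) ^ 2 := by
      have hstep : ‖a‖ ^ 2 * m ^ 2 / (16 * (max 1 ‖K‖) ^ 2) ≤ ‖a‖ ^ 2 / 16 := by
        have hm2 : m ^ 2 ≤ 1 := by nlinarith
        apply div_le_div₀ (by positivity)
          (by nlinarith [mul_le_mul_of_nonneg_left hm2 (sq_nonneg ‖a‖)]) (by norm_num)
          (by nlinarith)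
      have : (‖a‖ / 2) ^ 2 = ‖a‖ ^ 2 / 4 := by ring
      rw [this]
      have := sq_nonneg ‖a‖
      linarith
    nlinarith [sq_nonneg ‖L (T a) + W a‖]
  · -- first term dominates
    push_neg at hcase
    have hKpos : 0 < ‖K‖ := by
      by_contra h
      push_neg at h
      have hK : ‖K‖ = 0 := le_antisymm h hK0
      rw [hK, zero_mul] at hcase
      have := norm_nonneg a
      linarith
    have hTa : ‖a‖ / (2 * ‖K‖) ≤ ‖T a‖ := by
      rw [div_le_iff₀ (by positivity)]
      nlinarith
    have hL1 : σmin * (‖a‖ / (2 * ‖K‖)) ≤ ‖L (T a)‖ :=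
      le_trans (mul_le_mul_of_nonneg_left hTa hσ0) (hLlow (T a))
    have hWa : ‖W a‖ ≤ m / (4 * ‖K‖) * ‖a‖ :=
      le_trans (W.le_opNorm a) (mul_le_mul_of_nonneg_right hW (norm_nonneg a))
    have htri : ‖L (T a)‖ - ‖W a‖ ≤ ‖L (T a) + W a‖ := by
      have := norm_add_le (L (T a) + W a) (-(W a))
      simp only [add_neg_cancel_right, norm_neg] at this
      linarith
    have hr : m * ‖a‖ / (4 * ‖K‖) ≤ ‖L (T a) + W a‖ := by
      have h1 : m * (‖a‖ / (2 * ‖K‖)) ≤ σmin * (‖a‖ / (2 * ‖K‖)) :=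
        mul_le_mul_of_nonneg_right hmσ (by positivity)
      have h2 : m * ‖a‖ / (4 * ‖K‖) + m / (4 * ‖K‖) * ‖a‖ = m * (‖a‖ / (2 * ‖K‖)) := by
        field_simp
        ring
      linarith
    have hr0 : 0 ≤ m * ‖a‖ / (4 * ‖K‖) := by positivity
    have hsq : (m * ‖a‖ / (4 * ‖K‖)) ^ 2 ≤ ‖L (T a) + W a‖ ^ 2 := by nlinarith
    have hfrac : ‖a‖ ^ 2 * m ^ 2 / (16 * (max 1 ‖K‖) ^ 2) ≤ (m * ‖a‖ / (4 * ‖K‖)) ^ 2 := by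
      rw [div_pow]
      apply div_le_div₀ (by positivity) (le_of_eq (by ring)) (by positivity)
        (by nlinarith)
    linarith [sq_nonneg ‖a + K (T a)‖]
end

section
/- Let X_{1:K} and Y_{1:K} be matrix sequences with Y_k ⪰ 0, let Q ⪰ I, τ > 0, and define Λ_{K+1} = Q, Λ_k = X_kᵀ Λ_{k+1} X_k + τQ + Y_k. Suppose max_k ‖I − X_k‖_op ≤ κτ for some κ with κτ ≤ 1/2. Then for all k ∈ [K+1], λ_min(Λ_k) ≥ min{1/(2κ), 1}. -/
open Matrix

/-- The `ℓ₂ → ℓ₂` operator norm of a real matrix. -/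
noncomputable def opNorm {m n : ℕ} (M : Matrix (Fin m) (Fin n) ℝ) : ℝ :=
  ‖LinearMap.toContinuousLinearMap (Matrix.toEuclideanLin M)‖

lemma mulVec_norm_le' {n : ℕ} (M : Matrix (Fin n) (Fin n) ℝ) (x : EuclideanSpace ℝ (Fin n)) :
    ‖(WithLp.equiv 2 (Fin n → ℝ)).symm (M *ᵥ (WithLp.equiv 2 (Fin n → ℝ)) x)‖ ≤ opNorm M * ‖x‖ := by
  simp only [WithLp.equiv_symm_apply, WithLp.equiv_apply, ← Matrix.toEuclideanLin_apply]
  exact (LinearMap.toContinuousLinearMap (Matrix.toEuclideanLin M)).le_opNorm x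

lemma key_psd {n : ℕ} (τ κ c : ℝ) (hτ : 0 < τ) (hκ : 0 < κ) (hc0 : 0 ≤ c)
    (hc2 : 2 * c * κ ≤ 1) (hκτ : κ * τ ≤ 1 / 2)
    (X : Matrix (Fin n) (Fin n) ℝ) (hX : opNorm (1 - X) ≤ κ * τ) :
    (c • (Xᵀ * X) + (τ - c) • (1 : Matrix (Fin n) (Fin n) ℝ)).PosSemidef := by
  refine Matrix.posSemidef_iff_dotProduct_mulVec.mpr ⟨?_, ?_⟩
  · have h1 : (Xᵀ * X).IsHermitian := by
      have := Matrix.isHermitian_conjTranspose_mul_self X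
      simpa using this
    simp [Matrix.IsHermitian, Matrix.conjTranspose_add, Matrix.conjTranspose_smul, h1]
  · intro x
    have hsx : star x = x := by simp
    rw [hsx]
    set e := WithLp.equiv 2 (Fin n → ℝ)
    set v : EuclideanSpace ℝ (Fin n) := e.symm x with hv
    have hex : e v = x := rfl
    set a := ‖e.symm (X *ᵥ x)‖ with ha
    set b := ‖v‖ with hb
    have hb0 : 0 ≤ b := norm_nonneg _
    have ha0 : 0 ≤ a := norm_nonneg _
    have hbsq : x ⬝ᵥ x = b ^ 2 := by
      rw [hb, ← real_inner_self_eq_norm_sq]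
      simp [PiLp.inner_apply, dotProduct, v, e]
      rw [EuclideanSpace.norm_sq_eq]; simp [sq]
    have hasq : (X *ᵥ x) ⬝ᵥ (X *ᵥ x) = a ^ 2 := by
      rw [ha, ← real_inner_self_eq_norm_sq]
      simp [PiLp.inner_apply, dotProduct, e]
      rw [EuclideanSpace.norm_sq_eq]; simp [sq]
    have hE : ‖e.symm ((1 - X) *ᵥ x)‖ ≤ κ * τ * b := by
      have := mulVec_norm_le' (1 - X) v
      rw [hex] at this
      calc ‖e.symm ((1 - X) *ᵥ x)‖ ≤ opNorm (1 - X) * ‖v‖ := this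
        _ ≤ κ * τ * b := by
            apply mul_le_mul_of_nonneg_right hX hb0
    have htri : b ≤ ‖e.symm ((1 - X) *ᵥ x)‖ + a := by
      have hsum : v = e.symm ((1 - X) *ᵥ x) + e.symm (X *ᵥ x) := by
        rw [hv]
        show e.symm x = e.symm (((1 - X) *ᵥ x) + (X *ᵥ x))
        congr 1
        rw [Matrix.sub_mulVec, Matrix.one_mulVec]
        abel
      calc b = ‖e.symm ((1 - X) *ᵥ x) + e.symm (X *ᵥ x)‖ := by rw [hb, hsum]
        _ ≤ _ := norm_add_le _ _
    have hab : (1 - κ * τ) * b ≤ a := by nlinarith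
    have h0 : 0 ≤ (1 - κ * τ) * b := by nlinarith
    have hsq : (1 - κ * τ) ^ 2 * b ^ 2 ≤ a ^ 2 := by
      nlinarith [mul_self_le_mul_self h0 hab]
    have hgoal : 0 ≤ c * a ^ 2 + (τ - c) * b ^ 2 := by
      nlinarith [mul_le_mul_of_nonneg_left hsq hc0, sq_nonneg b,
        mul_nonneg (mul_nonneg (le_of_lt hτ) (by linarith : (0:ℝ) ≤ 1 - 2 * c * κ)) (sq_nonneg b),
        mul_nonneg (mul_nonneg hc0 (sq_nonneg (κ * τ))) (sq_nonneg b)]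
    calc (0:ℝ) ≤ c * a ^ 2 + (τ - c) * b ^ 2 := hgoal
      _ = x ⬝ᵥ (c • (Xᵀ * X) + (τ - c) • (1 : Matrix (Fin n) (Fin n) ℝ)) *ᵥ x := by
          rw [Matrix.add_mulVec, dotProduct_add, Matrix.smul_mulVec,
            Matrix.smul_mulVec, Matrix.one_mulVec, dotProduct_smul,
            dotProduct_smul, hbsq, ← Matrix.mulVec_mulVec,
            Matrix.dotProduct_mulVec x Xᵀ, Matrix.vecMul_transpose, hasq]
          simp only [smul_eq_mul]

lemma psd_smul' {n : ℕ} {M : Matrix (Fin n) (Fin n) ℝ} (h : M.PosSemidef) {t : ℝ} (ht : 0 ≤ t) :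
    (t • M).PosSemidef := by
  refine Matrix.posSemidef_iff_dotProduct_mulVec.mpr ⟨?_, ?_⟩
  · show _ = _
    rw [Matrix.conjTranspose_smul, star_trivial, h.1.eq]
  · intro x
    rw [Matrix.smul_mulVec, dotProduct_smul, smul_eq_mul]
    exact mul_nonneg ht (h.dotProduct_mulVec_nonneg x)

/-- Lower bound on a discrete Lyapunov recursion: with `Λ_{K+1} = Q ⪰ I`,
`Λ_k = X_kᵀ Λ_{k+1} X_k + τQ + Y_k`, `Y_k ⪰ 0`, and `max_k ‖I − X_k‖_op ≤ κτ ≤ 1/2`,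
one has `λ_min(Λ_k) ≥ min{1/(2κ), 1}` for all `k ∈ [K+1]`. -/
theorem lyapunov_recursion_eigenvalue_lower_bound {n K : ℕ}
    (τ κ : ℝ) (hτ : 0 < τ) (hκ : 0 < κ) (hκτ : κ * τ ≤ 1 / 2)
    (X Y Λ : ℕ → Matrix (Fin n) (Fin n) ℝ) (Q : Matrix (Fin n) (Fin n) ℝ)
    (hQ : (Q - 1).PosSemidef)
    (hY : ∀ k, 1 ≤ k → k ≤ K → (Y k).PosSemidef)
    (hX : ∀ k, 1 ≤ k → k ≤ K → opNorm (1 - X k) ≤ κ * τ)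
    (hΛtop : Λ (K + 1) = Q)
    (hrec : ∀ k, 1 ≤ k → k ≤ K →
      Λ k = (X k)ᵀ * Λ (k + 1) * X k + τ • Q + Y k) :
    ∀ k, 1 ≤ k → k ≤ K + 1 →
      (Λ k - min (1 / (2 * κ)) 1 • (1 : Matrix (Fin n) (Fin n) ℝ)).PosSemidef := by
  set c := min (1 / (2 * κ)) 1 with hcdef
  have hc0 : 0 ≤ c := le_min (by positivity) zero_le_one
  have hc1 : c ≤ 1 := min_le_right _ _
  have hc2 : 2 * c * κ ≤ 1 := by
    have h := min_le_left (1 / (2 * κ)) 1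
    rw [le_div_iff₀ (by positivity)] at h
    nlinarith
  -- base case
  have hbase : (Λ (K + 1) - c • (1 : Matrix (Fin n) (Fin n) ℝ)).PosSemidef := by
    have hid : Λ (K + 1) - c • (1 : Matrix (Fin n) (Fin n) ℝ)
        = (Q - 1) + (1 - c) • (1 : Matrix (Fin n) (Fin n) ℝ) := by
      rw [hΛtop, sub_smul, one_smul]
      abel
    rw [hid]
    exact hQ.add (psd_smul' Matrix.PosSemidef.one (by linarith))
  -- downward induction
  have main : ∀ m, m ≤ K →
      (Λ (K + 1 - m) - c • (1 : Matrix (Fin n) (Fin n) ℝ)).PosSemidef := by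
    intro m
    induction m with
    | zero => intro _; simpa using hbase
    | succ m ih =>
      intro hm
      have hmK : m ≤ K := by omega
      have hM := ih hmK
      set k := K + 1 - (m + 1) with hk
      have hk1 : 1 ≤ k := by omega
      have hk2 : k ≤ K := by omega
      have hk3 : k + 1 = K + 1 - m := by omega
      rw [← hk3] at hM
      have hid : Λ k - c • (1 : Matrix (Fin n) (Fin n) ℝ)
          = (X k)ᵀ * (Λ (k + 1) - c • (1 : Matrix (Fin n) (Fin n) ℝ)) * (X k)
            + (τ • (Q - 1) + (Y k
              + (c • ((X k)ᵀ * X k) + (τ - c) • (1 : Matrix (Fin n) (Fin n) ℝ)))) := by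
        rw [hrec k hk1 hk2]
        simp only [Matrix.mul_sub, Matrix.sub_mul, Matrix.mul_smul, Matrix.smul_mul,
          mul_one, smul_sub, sub_smul]
        abel
      rw [hid]
      have h1 : ((X k)ᵀ * (Λ (k + 1) - c • (1 : Matrix (Fin n) (Fin n) ℝ)) * (X k)).PosSemidef := by
        have := hM.conjTranspose_mul_mul_same (X k)
        rwa [Matrix.conjTranspose_eq_transpose_of_trivial] at this
      exact h1.add ((psd_smul' hQ (le_of_lt hτ)).add ((hY k hk1 hk2).add
        (key_psd τ κ c hτ hκ hc0 hc2 hκτ (X k) (hX k hk1 hk2))))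
  intro k hk1 hk2
  have h := main (K + 1 - k) (by omega)
  have : K + 1 - (K + 1 - k) = k := by omega
  rwa [this] at h
end

section
/- Let X_{1:K} be square matrices, Q ⪰ I, τ > 0, and define the Lyapunov recursion Λ_{K+1} = Q, Λ_k = X_kᵀ Λ_{k+1} X_k + τ(Q + Y_k) with Y_k ⪰ 0. Define Φ_{j,k} := X_{j−1}·X_{j−2}⋯X_k (with Φ_{k,k} = I). Suppose max_k ‖I − X_k‖_op ≤ κτ with κτ ≤ 1/2, and set M := max_{k} ‖Λ_k‖_op and γ := 1/M. Then for all 1 ≤ k ≤ j ≤ K+1, ‖Φ_{j,k}‖_op² ≤ max{1, 2κ}·M·(1 − τγ)^{j−k}. -/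
open Matrix RealInnerProductSpace

namespace LyapAux
variable {n : ℕ}

noncomputable def en (v : Fin n → ℝ) : EuclideanSpace ℝ (Fin n) :=
  (WithLp.equiv 2 (Fin n → ℝ)).symm v

lemma en_inner (v w : Fin n → ℝ) : ⟪en v, en w⟫ = v ⬝ᵥ w := by
  simp [en, PiLp.inner_apply, dotProduct, RCLike.inner_apply]
  exact Finset.sum_congr rfl fun _ _ => mul_comm _ _

lemma en_norm_sq (v : Fin n → ℝ) : ‖en v‖ ^ 2 = v ⬝ᵥ v := by
  rw [← real_inner_self_eq_norm_sq, en_inner]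

lemma dself_nonneg (v : Fin n → ℝ) : 0 ≤ v ⬝ᵥ v := by
  rw [← en_norm_sq]; positivity

lemma mulVec_en_le (A : Matrix (Fin n) (Fin n) ℝ) (v : Fin n → ℝ) :
    ‖en (A *ᵥ v)‖ ≤ opNorm A * ‖en v‖ := by
  have h := ContinuousLinearMap.le_opNorm
    (LinearMap.toContinuousLinearMap (Matrix.toEuclideanLin A)) (en v)
  rw [LinearMap.coe_toContinuousLinearMap'] at h
  rw [show Matrix.toEuclideanLin A (en v) = en (A *ᵥ v) from
    Matrix.toEuclideanLin_apply_piLp_toLp A v] at h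
  exact h

lemma opNorm_nonneg (A : Matrix (Fin n) (Fin n) ℝ) : 0 ≤ opNorm A := norm_nonneg _

lemma quad_le (A : Matrix (Fin n) (Fin n) ℝ) (v : Fin n → ℝ) :
    v ⬝ᵥ (A *ᵥ v) ≤ opNorm A * (v ⬝ᵥ v) := by
  calc v ⬝ᵥ (A *ᵥ v) = ⟪en v, en (A *ᵥ v)⟫ := (en_inner _ _).symm
    _ ≤ ‖en v‖ * ‖en (A *ᵥ v)‖ := real_inner_le_norm _ _
    _ ≤ ‖en v‖ * (opNorm A * ‖en v‖) :=
        mul_le_mul_of_nonneg_left (mulVec_en_le A v) (norm_nonneg _)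
    _ = opNorm A * (v ⬝ᵥ v) := by rw [← en_norm_sq]; ring

lemma opNorm_sq_le (A : Matrix (Fin n) (Fin n) ℝ) (c : ℝ) (hc : 0 ≤ c)
    (h : ∀ v : Fin n → ℝ, (A *ᵥ v) ⬝ᵥ (A *ᵥ v) ≤ c * (v ⬝ᵥ v)) :
    opNorm A ^ 2 ≤ c := by
  have hop : opNorm A ≤ Real.sqrt c := by
    apply ContinuousLinearMap.opNorm_le_bound _ (Real.sqrt_nonneg c)
    intro x
    have hx : x = en ((WithLp.equiv 2 (Fin n → ℝ)) x) := rfl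
    rw [LinearMap.coe_toContinuousLinearMap']
    set v := (WithLp.equiv 2 (Fin n → ℝ)) x with hv
    rw [hx, show Matrix.toEuclideanLin A (en v) = en (A *ᵥ v) from
      Matrix.toEuclideanLin_apply_piLp_toLp A v]
    have h1 : ‖en (A *ᵥ v)‖ ^ 2 ≤ (Real.sqrt c * ‖en v‖) ^ 2 := by
      rw [en_norm_sq, mul_pow, Real.sq_sqrt hc, en_norm_sq]
      exact h v
    have h2 := Real.sqrt_le_sqrt h1
    rwa [Real.sqrt_sq (norm_nonneg _), Real.sqrt_sq (by positivity)] at h2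
  calc opNorm A ^ 2 ≤ Real.sqrt c ^ 2 :=
        pow_le_pow_left₀ (opNorm_nonneg A) hop 2
    _ = c := Real.sq_sqrt hc

lemma psd_quad (A : Matrix (Fin n) (Fin n) ℝ) (hA : A.PosSemidef) (v : Fin n → ℝ) :
    0 ≤ v ⬝ᵥ (A *ᵥ v) := by simpa using (posSemidef_iff_dotProduct_mulVec.mp hA).2 v

lemma quad_transpose_mul (X B : Matrix (Fin n) (Fin n) ℝ) (v : Fin n → ℝ) :
    v ⬝ᵥ ((Xᵀ * B * X) *ᵥ v) = (X *ᵥ v) ⬝ᵥ (B *ᵥ (X *ᵥ v)) := by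
  rw [← mulVec_mulVec, ← mulVec_mulVec, dotProduct_mulVec, vecMul_transpose]

lemma quad_rec (Xk Λ1 Q Yk : Matrix (Fin n) (Fin n) ℝ) (τ : ℝ) (v : Fin n → ℝ) :
    v ⬝ᵥ ((Xkᵀ * Λ1 * Xk + τ • (Q + Yk)) *ᵥ v)
      = (Xk *ᵥ v) ⬝ᵥ (Λ1 *ᵥ (Xk *ᵥ v)) + τ * (v ⬝ᵥ (Q *ᵥ v)) + τ * (v ⬝ᵥ (Yk *ᵥ v)) := by
  rw [add_mulVec, dotProduct_add, quad_transpose_mul, smul_mulVec, dotProduct_smul,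
    add_mulVec, dotProduct_add, smul_eq_mul]
  ring

lemma mulVec_lower (X : Matrix (Fin n) (Fin n) ℝ) (b : ℝ) (hb : opNorm (1 - X) ≤ b)
    (hb1 : b ≤ 1) (v : Fin n → ℝ) :
    (1 - b) ^ 2 * (v ⬝ᵥ v) ≤ (X *ᵥ v) ⬝ᵥ (X *ᵥ v) := by
  have hsplit : en v = en (X *ᵥ v) + en ((1 - X) *ᵥ v) := by
    have h : X *ᵥ v + (1 - X) *ᵥ v = v := by
      rw [← add_mulVec]; simp
    rw [show en (X *ᵥ v) + en ((1 - X) *ᵥ v) = en (X *ᵥ v + (1 - X) *ᵥ v) from rfl, h]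
  have h1 : ‖en v‖ ≤ ‖en (X *ᵥ v)‖ + ‖en ((1 - X) *ᵥ v)‖ := by
    rw [hsplit]; exact norm_add_le _ _
  have h2 : ‖en ((1 - X) *ᵥ v)‖ ≤ b * ‖en v‖ :=
    (mulVec_en_le _ v).trans (mul_le_mul_of_nonneg_right hb (norm_nonneg _))
  have key : (1 - b) * ‖en v‖ ≤ ‖en (X *ᵥ v)‖ := by nlinarith [norm_nonneg (en v)]
  rw [← en_norm_sq, ← en_norm_sq]
  have h0 : 0 ≤ (1 - b) * ‖en v‖ := mul_nonneg (by linarith) (norm_nonneg _)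
  have h3 := mul_le_mul key key h0 (norm_nonneg _)
  nlinarith [h3]

lemma quad_one_le (Q : Matrix (Fin n) (Fin n) ℝ) (hQ : (Q - 1).PosSemidef) (v : Fin n → ℝ) :
    v ⬝ᵥ v ≤ v ⬝ᵥ (Q *ᵥ v) := by
  have h := psd_quad _ hQ v
  rw [sub_mulVec, dotProduct_sub, one_mulVec] at h
  linarith

end LyapAux

/-- Exponential decay of the products `Φ_{j,k} = X_{j−1}⋯X_k` under the Lyapunov recursion
`Λ_{K+1} = Q ⪰ I`, `Λ_k = X_kᵀ Λ_{k+1} X_k + τ(Q + Y_k)` with `Y_k ⪰ 0` and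
`‖I − X_k‖_op ≤ κτ ≤ 1/2`: with `M = max_k ‖Λ_k‖_op` and `γ = 1/M`,
`‖Φ_{j,k}‖_op² ≤ max{1, 2κ} M (1 − τγ)^{j−k}`. -/
theorem lyapunov_transition_operator_decay {n K : ℕ}
    (τ κ γ M : ℝ) (hτ : 0 < τ) (hκ : 0 < κ) (hκτ : κ * τ ≤ 1 / 2)
    (X Y Λ : ℕ → Matrix (Fin n) (Fin n) ℝ) (Q : Matrix (Fin n) (Fin n) ℝ)
    (Φ : ℕ → ℕ → Matrix (Fin n) (Fin n) ℝ)
    (hQ : (Q - 1).PosSemidef)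
    (hY : ∀ k, 1 ≤ k → k ≤ K → (Y k).PosSemidef)
    (hX : ∀ k, 1 ≤ k → k ≤ K → opNorm (1 - X k) ≤ κ * τ)
    (hΛtop : Λ (K + 1) = Q)
    (hrec : ∀ k, 1 ≤ k → k ≤ K →
      Λ k = (X k)ᵀ * Λ (k + 1) * X k + τ • (Q + Y k))
    (hΦdiag : ∀ k, Φ k k = 1)
    (hΦrec : ∀ j k, k ≤ j → Φ (j + 1) k = X j * Φ j k)
    (hM : M = (Finset.Icc 1 (K + 1)).sup'
      (Finset.nonempty_Icc.mpr (by omega)) fun k => opNorm (Λ k))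
    (hγ : γ = 1 / M) :
    ∀ k j, 1 ≤ k → k ≤ j → j ≤ K + 1 →
      opNorm (Φ j k) ^ 2 ≤ max 1 (2 * κ) * M * (1 - τ * γ) ^ (j - k) := by
  intro k j hk hkj hjK
  rcases Nat.eq_zero_or_pos n with hn | hn
  · subst hn
    have h0 : ∀ A : Matrix (Fin 0) (Fin 0) ℝ, opNorm A = 0 := by
      intro A
      have hz : LinearMap.toContinuousLinearMap (Matrix.toEuclideanLin A) = 0 := by
        ext x i
        exact i.elim0
      rw [opNorm, hz, norm_zero]
    have hM0 : M = 0 := by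
      rw [hM, show (fun k => opNorm (Λ k)) = fun _ => (0:ℝ) from funext fun m => h0 _,
        Finset.sup'_const]
    rw [h0, hM0, mul_zero, zero_mul]
    norm_num
  -- main case : n ≥ 1
  set c := (max 1 (2 * κ))⁻¹ with hcdef
  have hmax1 : (1:ℝ) ≤ max 1 (2*κ) := le_max_left _ _
  have hmaxpos : (0:ℝ) < max 1 (2*κ) := lt_of_lt_of_le one_pos hmax1
  have hc0 : 0 < c := inv_pos.mpr hmaxpos
  have hmc : max 1 (2*κ) * c = 1 := mul_inv_cancel₀ hmaxpos.ne'
  have hc1 : c ≤ 1 := by nlinarith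
  have h2κc : 2*κ*c ≤ 1 := by nlinarith [le_max_right (1:ℝ) (2*κ)]
  have hκτ1 : κ * τ ≤ 1 := by linarith
  have hκτ0 : 0 ≤ κ * τ := by positivity
  -- Step 1: Λ_j ⪰ c • 1 for 1 ≤ j ≤ K+1
  have lower : ∀ d jj, 1 ≤ jj → jj + d = K + 1 → ∀ v : Fin n → ℝ,
      c * (v ⬝ᵥ v) ≤ v ⬝ᵥ (Λ jj *ᵥ v) := by
    intro d
    induction d with
    | zero =>
      intro jj h1 h2 v
      have hje : jj = K + 1 := by omega
      subst hje
      rw [hΛtop]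
      have hQv := LyapAux.quad_one_le Q hQ v
      have hvv := LyapAux.dself_nonneg v
      nlinarith
    | succ d ih =>
      intro jj h1 h2 v
      have hjjK : jj ≤ K := by omega
      rw [hrec jj h1 hjjK, LyapAux.quad_rec]
      have hIH := ih (jj+1) (by omega) (by omega) (X jj *ᵥ v)
      have hXlow := LyapAux.mulVec_lower (X jj) (κ*τ) (hX jj h1 hjjK) hκτ1 v
      have hQv := LyapAux.quad_one_le Q hQ v
      have hYv := LyapAux.psd_quad _ (hY jj h1 hjjK) v
      have hvv := LyapAux.dself_nonneg v
      have hXvv := LyapAux.dself_nonneg (X jj *ᵥ v)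
      have key1 : 0 ≤ τ * (1 - 2*κ*c) * (v ⬝ᵥ v) :=
        mul_nonneg (mul_nonneg hτ.le (by linarith)) hvv
      have key2 : 0 ≤ c * ((κ*τ)^2 * (v ⬝ᵥ v)) := by positivity
      have hcX := mul_le_mul_of_nonneg_left hXlow hc0.le
      nlinarith [hIH, hcX, key1, key2, mul_le_mul_of_nonneg_left hQv hτ.le,
        mul_nonneg hτ.le hYv]
  -- Step 2: upper bounds via M
  have hMk : ∀ m, 1 ≤ m → m ≤ K+1 → opNorm (Λ m) ≤ M := by
    intro m h1 h2
    rw [hM]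
    exact Finset.le_sup' (fun k => opNorm (Λ k)) (Finset.mem_Icc.mpr ⟨h1, h2⟩)
  have quadM : ∀ m, 1 ≤ m → m ≤ K+1 → ∀ v : Fin n → ℝ,
      v ⬝ᵥ (Λ m *ᵥ v) ≤ M * (v ⬝ᵥ v) := fun m h1 h2 v =>
    (LyapAux.quad_le _ v).trans
      (mul_le_mul_of_nonneg_right (hMk m h1 h2) (LyapAux.dself_nonneg v))
  -- unit vector
  set e : Fin n → ℝ := Pi.single ⟨0, hn⟩ 1 with hedef
  have hee : e ⬝ᵥ e = 1 := by
    simp [hedef, dotProduct, Pi.single_apply]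
  have hM1 : (1:ℝ) ≤ M := by
    have h1 : e ⬝ᵥ e ≤ e ⬝ᵥ (Λ (K+1) *ᵥ e) := by
      rw [hΛtop]; exact LyapAux.quad_one_le Q hQ e
    have h2 := quadM (K+1) (by omega) le_rfl e
    rw [hee] at h1 h2
    linarith
  have hMpos : (0:ℝ) < M := lt_of_lt_of_le one_pos hM1
  have hMτ : 1 ≤ K → τ ≤ M := by
    intro hK
    have h1 : τ ≤ e ⬝ᵥ (Λ K *ᵥ e) := by
      rw [hrec K hK le_rfl, LyapAux.quad_rec]
      have hL := lower 0 (K+1) (by omega) (by omega) (X K *ᵥ e)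
      have hQe := LyapAux.quad_one_le Q hQ e
      have hYe := LyapAux.psd_quad _ (hY K hK le_rfl) e
      have hXee := LyapAux.dself_nonneg (X K *ᵥ e)
      rw [hee] at hQe
      nlinarith [hc0.le, hτ.le]
    have h2 := quadM K hK (by omega) e
    rw [hee] at h2
    linarith
  have h1γ : 1 ≤ K → 0 ≤ 1 - τ * γ := by
    intro hK
    rw [sub_nonneg, hγ, mul_one_div]
    exact (div_le_one hMpos).mpr (hMτ hK)
  -- Step 3: decay of the Lyapunov quadratic along products
  have decay : ∀ v : Fin n → ℝ, ∀ jj (hjk : k ≤ jj), jj ≤ K + 1 →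
      (Φ jj k *ᵥ v) ⬝ᵥ (Λ jj *ᵥ (Φ jj k *ᵥ v))
        ≤ (1 - τ*γ)^(jj - k) * (v ⬝ᵥ (Λ k *ᵥ v)) := by
    intro v jj hjk
    induction jj, hjk using Nat.le_induction with
    | base =>
      intro _
      rw [hΦdiag k, one_mulVec, Nat.sub_self, pow_zero, one_mul]
    | succ m hkm ih =>
      intro hm1K
      have hmK : m ≤ K := by omega
      have hm1 : 1 ≤ m := le_trans hk hkm
      have hK1 : 1 ≤ K := by omega
      have hw := ih (by omega)
      set w := Φ m k *ᵥ v with hwdef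
      have hΦs : Φ (m+1) k *ᵥ v = X m *ᵥ w := by
        rw [hΦrec m k hkm, ← mulVec_mulVec]
      rw [hΦs]
      have hq : (X m *ᵥ w) ⬝ᵥ (Λ (m+1) *ᵥ (X m *ᵥ w))
          = w ⬝ᵥ (Λ m *ᵥ w) - τ * (w ⬝ᵥ (Q *ᵥ w)) - τ * (w ⬝ᵥ (Y m *ᵥ w)) := by
        have h := LyapAux.quad_rec (X m) (Λ (m+1)) Q (Y m) τ w
        rw [← hrec m hm1 hmK] at h
        linarith
      rw [hq]
      have hQw := LyapAux.quad_one_le Q hQ w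
      have hYw := LyapAux.psd_quad _ (hY m hm1 hmK) w
      have hMw := quadM m hm1 (by omega) w
      have hγw : τ * γ * (w ⬝ᵥ (Λ m *ᵥ w)) ≤ τ * (w ⬝ᵥ w) := by
        rw [hγ]
        have h' : τ * (1/M) * (w ⬝ᵥ (Λ m *ᵥ w)) ≤ τ * (1/M) * (M * (w ⬝ᵥ w)) :=
          mul_le_mul_of_nonneg_left hMw (by positivity)
        have h'' : τ * (1/M) * (M * (w ⬝ᵥ w)) = τ * (w ⬝ᵥ w) := by
          field_simp
        linarith
      have hstep : w ⬝ᵥ (Λ m *ᵥ w) - τ*(w ⬝ᵥ (Q *ᵥ w)) - τ*(w ⬝ᵥ (Y m *ᵥ w))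
          ≤ (1 - τ*γ) * (w ⬝ᵥ (Λ m *ᵥ w)) := by
        have hww := LyapAux.dself_nonneg w
        linarith [mul_le_mul_of_nonneg_left hQw hτ.le, mul_nonneg hτ.le hYw, hγw]
      refine hstep.trans ?_
      have hps : (1 - τ*γ) * (w ⬝ᵥ (Λ m *ᵥ w))
          ≤ (1 - τ*γ) * ((1-τ*γ)^(m-k) * (v ⬝ᵥ (Λ k *ᵥ v))) :=
        mul_le_mul_of_nonneg_left hw (h1γ hK1)
      refine hps.trans (le_of_eq ?_)
      rw [show m+1-k = (m-k)+1 from by omega, pow_succ]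
      ring
  -- Final assembly
  have hpw : 0 ≤ (1 - τ*γ)^(j-k) := by
    rcases eq_or_lt_of_le hkj with he | hl
    · rw [← he, Nat.sub_self, pow_zero]; norm_num
    · exact pow_nonneg (h1γ (by omega)) _
  have hbound : ∀ v : Fin n → ℝ,
      (Φ j k *ᵥ v) ⬝ᵥ (Φ j k *ᵥ v)
        ≤ (max 1 (2*κ) * M * (1 - τ*γ)^(j-k)) * (v ⬝ᵥ v) := by
    intro v
    have h1 := lower (K+1-j) j (by omega) (by omega) (Φ j k *ᵥ v)
    have h2 := decay v j hkj hjK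
    have h3 := quadM k hk (by omega) v
    have h4 : (1-τ*γ)^(j-k) * (v ⬝ᵥ (Λ k *ᵥ v)) ≤ (1-τ*γ)^(j-k) * (M * (v ⬝ᵥ v)) :=
      mul_le_mul_of_nonneg_left h3 hpw
    have h5 : c * ((Φ j k *ᵥ v) ⬝ᵥ (Φ j k *ᵥ v)) ≤ (1-τ*γ)^(j-k) * (M * (v ⬝ᵥ v)) :=
      le_trans h1 (le_trans h2 h4)
    calc (Φ j k *ᵥ v) ⬝ᵥ (Φ j k *ᵥ v)
        = max 1 (2*κ) * (c * ((Φ j k *ᵥ v) ⬝ᵥ (Φ j k *ᵥ v))) := by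
          rw [← mul_assoc, hmc, one_mul]
      _ ≤ max 1 (2*κ) * ((1-τ*γ)^(j-k) * (M * (v ⬝ᵥ v))) :=
          mul_le_mul_of_nonneg_left h5 hmaxpos.le
      _ = (max 1 (2*κ) * M * (1-τ*γ)^(j-k)) * (v ⬝ᵥ v) := by ring
  exact LyapAux.opNorm_sq_le _ _
    (mul_nonneg (mul_nonneg hmaxpos.le hMpos.le) hpw) hbound
end

section
/- Let C, Ĉ, D, D̂ be matrices with D having full row rank d (so DDᵀ is invertible), and suppose the true relation A = C D† holds, where D† is the Moore–Penrose pseudoinverse. Define Δ := max{‖C − Ĉ‖_op, ‖D − D̂‖_op} and M := max{‖C‖_op, ‖D‖_op}. If Δ ≤ σ_min(D)/2, then the estimate Â := Ĉ D̂† satisfies ‖Â − A‖_op ≤ 6ΔM·σ_min(D)^{−2}. -/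
open Matrix

/-- The Moore–Penrose pseudoinverse of a full-row-rank matrix. -/
noncomputable def pinv {d p : ℕ} (D : Matrix (Fin d) (Fin p) ℝ) :
    Matrix (Fin p) (Fin d) ℝ :=
  Dᵀ * (D * Dᵀ)⁻¹

section Aux

open scoped Matrix.Norms.L2Operator RealInnerProductSpace

lemma Lmul {m n k : ℕ} (A : Matrix (Fin m) (Fin n) ℝ) (B : Matrix (Fin n) (Fin k) ℝ)
    (x : EuclideanSpace ℝ (Fin k)) :
    Matrix.toEuclideanLin (A * B) x = Matrix.toEuclideanLin A (Matrix.toEuclideanLin B x) := by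
  simp [Matrix.toEuclideanLin_apply, Matrix.mulVec_mulVec]

lemma Lone {d : ℕ} (x : EuclideanSpace ℝ (Fin d)) :
    Matrix.toEuclideanLin (1 : Matrix (Fin d) (Fin d) ℝ) x = x := by
  simp [Matrix.toEuclideanLin_apply]

lemma Ladj {m n : ℕ} (A : Matrix (Fin m) (Fin n) ℝ) (x : EuclideanSpace ℝ (Fin n))
    (y : EuclideanSpace ℝ (Fin m)) :
    ⟪Matrix.toEuclideanLin A x, y⟫ = ⟪x, Matrix.toEuclideanLin Aᵀ y⟫ := by
  have h : Aᵀ = Aᴴ := by ext i j; simp [Matrix.conjTranspose_apply]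
  rw [h, Matrix.toEuclideanLin_conjTranspose_eq_adjoint]
  exact (LinearMap.adjoint_inner_right _ x y).symm

lemma dot_eq_inner {d : ℕ} (S : Matrix (Fin d) (Fin d) ℝ) (x : Fin d → ℝ) :
    x ⬝ᵥ (S *ᵥ x) =
      ⟪(WithLp.equiv 2 _).symm x, Matrix.toEuclideanLin S ((WithLp.equiv 2 _).symm x)⟫ := by
  simp [Matrix.toEuclideanLin_apply, PiLp.inner_apply, dotProduct, RCLike.inner_apply, mul_comm]

lemma norm_sq_eq {d : ℕ} (x : EuclideanSpace ℝ (Fin d)) :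
    ‖x‖ ^ 2 = ⟪x, x⟫ := (real_inner_self_eq_norm_sq x).symm

lemma opn_le {m n : ℕ} (A : Matrix (Fin m) (Fin n) ℝ) {c : ℝ} (hc : 0 ≤ c)
    (h : ∀ x : EuclideanSpace ℝ (Fin n), ‖(Matrix.toEuclideanLin A) x‖ ≤ c * ‖x‖) : ‖A‖ ≤ c := by
  rw [Matrix.l2_opNorm_def]
  exact ContinuousLinearMap.opNorm_le_bound _ hc h

lemma le_opn {m n : ℕ} (A : Matrix (Fin m) (Fin n) ℝ) (x : EuclideanSpace ℝ (Fin n)) :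
    ‖(Matrix.toEuclideanLin A) x‖ ≤ ‖A‖ * ‖x‖ :=
  (Matrix.toEuclideanLin (𝕜 := ℝ) (m := Fin m) (n := Fin n) |>.trans
    LinearMap.toContinuousLinearMap A).le_opNorm x

lemma transpose_opn {m n : ℕ} (A : Matrix (Fin m) (Fin n) ℝ) : ‖Aᵀ‖ = ‖A‖ := by
  rw [← Matrix.l2_opNorm_conjTranspose A]; congr 1

/-- quadratic form of `G * Gᵀ` -/
lemma quad_eq {d p : ℕ} (G : Matrix (Fin d) (Fin p) ℝ) (x : EuclideanSpace ℝ (Fin d)) :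
    ⟪x, Matrix.toEuclideanLin (G * Gᵀ) x⟫ = ‖Matrix.toEuclideanLin Gᵀ x‖ ^ 2 := by
  rw [norm_sq_eq, Ladj Gᵀ x, Matrix.transpose_transpose, ← Lmul]

lemma core {d p : ℕ} (G : Matrix (Fin d) (Fin p) ℝ) (τ : ℝ) (hτ : 0 < τ)
    (h : ∀ x : EuclideanSpace ℝ (Fin d),
      τ ^ 2 * ‖x‖ ^ 2 ≤ ⟪x, Matrix.toEuclideanLin (G * Gᵀ) x⟫) :
    (G * Gᵀ) * (G * Gᵀ)⁻¹ = 1 ∧ (G * Gᵀ)⁻¹ * (G * Gᵀ) = 1 ∧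
    ‖(G * Gᵀ)⁻¹‖ ≤ 1 / τ ^ 2 ∧ ‖Gᵀ * (G * Gᵀ)⁻¹‖ ≤ 1 / τ := by
  set S := G * Gᵀ with hS
  have hpd : S.PosDef := by
    refine Matrix.PosDef.of_dotProduct_mulVec_pos ?_ ?_
    · have := Matrix.isHermitian_mul_conjTranspose_self G
      have hGt : Gᴴ = Gᵀ := by ext i j; simp [Matrix.conjTranspose_apply]
      rwa [hGt] at this
    · intro x hx
      have hx' : (WithLp.equiv 2 _).symm x ≠ (0 : EuclideanSpace ℝ (Fin d)) := by
        simpa using hx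
      have h2 := h ((WithLp.equiv 2 _).symm x)
      rw [← dot_eq_inner] at h2
      have : (0:ℝ) < τ ^ 2 * ‖(WithLp.equiv 2 (Fin d → ℝ)).symm x‖ ^ 2 := by
        have := norm_pos_iff.mpr hx'
        positivity
      simpa [dotProduct] using lt_of_lt_of_le this h2
  have hdet : IsUnit S.det := isUnit_iff_isUnit_det _ |>.1 hpd.isUnit
  have h1 : S * S⁻¹ = 1 := Matrix.mul_nonsing_inv _ hdet
  have h2 : S⁻¹ * S = 1 := Matrix.nonsing_inv_mul _ hdet
  have hw : ∀ x : EuclideanSpace ℝ (Fin d),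
      ‖Matrix.toEuclideanLin S⁻¹ x‖ ≤ 1 / τ ^ 2 * ‖x‖ ∧
      ⟪Matrix.toEuclideanLin S⁻¹ x, x⟫ ≤ 1 / τ ^ 2 * ‖x‖ ^ 2 := by
    intro x
    set w := Matrix.toEuclideanLin S⁻¹ x with hwdef
    have hx : Matrix.toEuclideanLin S w = x := by
      rw [hwdef, ← Lmul, h1, Lone]
    have hq := h w
    have hinner : ⟪w, Matrix.toEuclideanLin S w⟫ = ⟪w, x⟫ := by rw [hx]
    have hcs : ⟪w, x⟫ ≤ ‖w‖ * ‖x‖ := real_inner_le_norm w x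
    have hwle : ‖w‖ ≤ 1 / τ ^ 2 * ‖x‖ := by
      rcases eq_or_lt_of_le (norm_nonneg w) with h0 | h0
      · rw [← h0]; positivity
      · have : τ ^ 2 * ‖w‖ ^ 2 ≤ ‖w‖ * ‖x‖ := by
          calc τ ^ 2 * ‖w‖ ^ 2 ≤ ⟪w, Matrix.toEuclideanLin S w⟫ := hq
          _ = ⟪w, x⟫ := hinner
          _ ≤ ‖w‖ * ‖x‖ := hcs
        rw [div_mul_eq_mul_div, le_div_iff₀ (by positivity)]
        nlinarith
    refine ⟨hwle, ?_⟩
    calc ⟪w, x⟫ ≤ ‖w‖ * ‖x‖ := hcs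
    _ ≤ 1 / τ ^ 2 * ‖x‖ ^ 2 := by nlinarith [norm_nonneg x, norm_nonneg w]
  refine ⟨h1, h2, opn_le _ (by positivity) fun x => (hw x).1, ?_⟩
  apply opn_le _ (by positivity)
  intro x
  set w := Matrix.toEuclideanLin S⁻¹ x with hwdef
  have hu : Matrix.toEuclideanLin (Gᵀ * S⁻¹) x = Matrix.toEuclideanLin Gᵀ w := by
    rw [Lmul]
  have husq : ‖Matrix.toEuclideanLin Gᵀ w‖ ^ 2 = ⟪w, Matrix.toEuclideanLin S w⟫ := by
    rw [norm_sq_eq, Ladj, ← Lmul, Matrix.transpose_transpose]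
  have hx : Matrix.toEuclideanLin S w = x := by rw [hwdef, ← Lmul, h1, Lone]
  have hb : ‖Matrix.toEuclideanLin Gᵀ w‖ ^ 2 ≤ 1 / τ ^ 2 * ‖x‖ ^ 2 := by
    rw [husq, hx]
    exact (hw x).2
  rw [hu]
  have h1τ : (0:ℝ) ≤ 1 / τ * ‖x‖ := by positivity
  have hb' : ‖Matrix.toEuclideanLin Gᵀ w‖ ^ 2 ≤ (1 / τ * ‖x‖) ^ 2 := by
    rw [show (1 / τ * ‖x‖) ^ 2 = 1 / τ ^ 2 * ‖x‖ ^ 2 by ring]; exact hb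
  exact (pow_le_pow_iff_left₀ (norm_nonneg _) h1τ two_ne_zero).mp hb'

lemma proj_norm {q : ℕ} (Q : Matrix (Fin q) (Fin q) ℝ) (hsym : Qᵀ = Q) (hid : Q * Q = Q) :
    ‖Q‖ ≤ 1 := by
  apply opn_le _ zero_le_one
  intro x
  set y := Matrix.toEuclideanLin Q x with hy
  rcases eq_or_lt_of_le (norm_nonneg y) with h0 | h0
  · rw [← h0]; positivity
  · have hfix : Matrix.toEuclideanLin Q y = y := by rw [hy, ← Lmul, hid]
    have key : ‖y‖ ^ 2 = ⟪x, y⟫ := by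
      rw [norm_sq_eq]
      calc ⟪Matrix.toEuclideanLin Q x, y⟫ = ⟪x, Matrix.toEuclideanLin Qᵀ y⟫ := Ladj Q x y
      _ = ⟪x, y⟫ := by rw [hsym, hfix]
    have hcs : ⟪x, y⟫ ≤ ‖x‖ * ‖y‖ := real_inner_le_norm x y
    nlinarith
 
lemma identity {nr d p : ℕ} (C Chat : Matrix (Fin nr) (Fin p) ℝ)
    (D Dhat : Matrix (Fin d) (Fin p) ℝ)
    (h1 : (D * Dᵀ) * (D * Dᵀ)⁻¹ = 1)
    (h2 : (Dhat * Dhatᵀ) * (Dhat * Dhatᵀ)⁻¹ = 1)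
    (h2' : (Dhat * Dhatᵀ)⁻¹ * (Dhat * Dhatᵀ) = 1) :
    Chat * pinv Dhat - C * pinv D =
      (Chat - C) * pinv Dhat
      + C * (-(pinv Dhat * ((Dhat - D) * pinv D))
        + (1 - pinv Dhat * Dhat) * ((Dhat - D)ᵀ * (D * Dᵀ)⁻¹)) := by
  unfold pinv
  set Si := (D * Dᵀ)⁻¹ with hSi
  set Ti := (Dhat * Dhatᵀ)⁻¹ with hTi
  have r1' : D * (Dᵀ * Si) = 1 := by rw [← Matrix.mul_assoc]; exact h1
  have r1 : ∀ {k : ℕ} (X : Matrix (Fin d) (Fin k) ℝ), D * (Dᵀ * (Si * X)) = X := by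
    intro k X; rw [← Matrix.mul_assoc, ← Matrix.mul_assoc, h1, Matrix.one_mul]
  have r3 : ∀ {k : ℕ} (X : Matrix (Fin d) (Fin k) ℝ), Ti * (Dhat * (Dhatᵀ * X)) = X := by
    intro k X
    rw [← Matrix.mul_assoc, ← Matrix.mul_assoc, Matrix.mul_assoc Ti Dhat Dhatᵀ, h2',
      Matrix.one_mul]
  have r2' : Dhat * (Dhatᵀ * Ti) = 1 := by rw [← Matrix.mul_assoc]; exact h2
  simp only [Matrix.transpose_sub, Matrix.mul_sub, Matrix.sub_mul, Matrix.mul_assoc,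
    Matrix.mul_one, Matrix.one_mul, Matrix.mul_neg, Matrix.neg_mul,
    Matrix.mul_add, Matrix.add_mul, mul_smul_comm, smul_mul_assoc,
    r1, r1', r3, r2']
  abel


lemma main_bound {nr d p : ℕ}
    (C Chat : Matrix (Fin nr) (Fin p) ℝ) (D Dhat : Matrix (Fin d) (Fin p) ℝ)
    (σ Δ M : ℝ) (hσpos : 0 < σ)
    (hσ : (D * Dᵀ - σ ^ 2 • (1 : Matrix (Fin d) (Fin d) ℝ)).PosSemidef)
    (hΔ : Δ = max ‖C - Chat‖ ‖D - Dhat‖)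
    (hM : M = max ‖C‖ ‖D‖)
    (hsmall : Δ ≤ σ / 2) :
    ‖Chat * pinv Dhat - C * pinv D‖ ≤ 6 * Δ * M / σ ^ 2 := by
  have hΔ0 : 0 ≤ Δ := hΔ ▸ le_trans (norm_nonneg _) (le_max_left _ _)
  have hM0 : 0 ≤ M := hM ▸ le_trans (norm_nonneg _) (le_max_left _ _)
  have hrhs : 0 ≤ 6 * Δ * M / σ ^ 2 := by positivity
  -- degenerate case
  rcases Nat.eq_zero_or_pos d with hd | hd
  · subst hd
    apply opn_le _ hrhs
    intro x
    have hx : x = 0 := Subsingleton.elim x 0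
    simp [hx]
  -- quadratic form bounds
  have hqD : ∀ x : EuclideanSpace ℝ (Fin d),
      σ ^ 2 * ‖x‖ ^ 2 ≤ ⟪x, Matrix.toEuclideanLin (D * Dᵀ) x⟫ := by
    intro x
    have h := hσ.dotProduct_mulVec_nonneg ((WithLp.equiv 2 _) x)
    simp [Matrix.sub_mulVec, Matrix.smul_mulVec, dotProduct_sub,
      dotProduct_smul, Matrix.one_mulVec] at h
    have h2 : ⟪x, Matrix.toEuclideanLin (D * Dᵀ) x⟫
        = (WithLp.equiv 2 _) x ⬝ᵥ ((D * Dᵀ) *ᵥ ((WithLp.equiv 2 _) x)) := by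
      simp [Matrix.toEuclideanLin_apply, PiLp.inner_apply, dotProduct, RCLike.inner_apply, mul_comm]
    have h3 : ‖x‖ ^ 2 = (WithLp.equiv 2 _) x ⬝ᵥ (WithLp.equiv 2 _) x := by
      rw [← real_inner_self_eq_norm_sq]
      simp [PiLp.inner_apply, dotProduct]
      rw [EuclideanSpace.real_norm_sq_eq]; simp [sq]
    rw [h2, h3]
    exact h
  have hΔD : ‖D - Dhat‖ ≤ Δ := hΔ ▸ le_max_right _ _
  have hΔC : ‖C - Chat‖ ≤ Δ := hΔ ▸ le_max_left _ _
  have hCM : ‖C‖ ≤ M := hM ▸ le_max_left _ _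
  -- lower bound on ‖Dᵀ x‖
  have hDlow : ∀ x : EuclideanSpace ℝ (Fin d),
      σ * ‖x‖ ≤ ‖Matrix.toEuclideanLin Dᵀ x‖ := by
    intro x
    have h := hqD x
    rw [quad_eq] at h
    have : (σ * ‖x‖) ^ 2 ≤ ‖Matrix.toEuclideanLin Dᵀ x‖ ^ 2 := by
      rw [show (σ * ‖x‖) ^ 2 = σ ^ 2 * ‖x‖ ^ 2 by ring]; exact h
    exact (pow_le_pow_iff_left₀ (by positivity) (norm_nonneg _) two_ne_zero).mp this
  -- σ ≤ ‖D‖ ≤ M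
  have hσM : σ ≤ M := by
    have hx : ∃ x : EuclideanSpace ℝ (Fin d), ‖x‖ = 1 := by
      refine ⟨EuclideanSpace.single ⟨0, hd⟩ (1:ℝ), ?_⟩
      simp [EuclideanSpace.norm_single]
    obtain ⟨x, hx1⟩ := hx
    have h1 := hDlow x
    have h2 := le_opn Dᵀ x
    rw [hx1, transpose_opn] at *
    have : σ ≤ ‖D‖ := by
      rw [hx1] at h1 h2
      simpa using le_trans h1 (by simpa using h2)
    exact le_trans this (hM ▸ le_max_right _ _)
  -- quadratic bound for Dhat
  have hqDhat : ∀ x : EuclideanSpace ℝ (Fin d),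
      (σ / 2) ^ 2 * ‖x‖ ^ 2 ≤ ⟪x, Matrix.toEuclideanLin (Dhat * Dhatᵀ) x⟫ := by
    intro x
    rw [quad_eq]
    have hdiff : ‖Matrix.toEuclideanLin Dᵀ x - Matrix.toEuclideanLin Dhatᵀ x‖ ≤ Δ * ‖x‖ := by
      have : Matrix.toEuclideanLin Dᵀ x - Matrix.toEuclideanLin Dhatᵀ x
          = Matrix.toEuclideanLin ((D - Dhat)ᵀ) x := by
        rw [Matrix.transpose_sub, map_sub]; rfl
      rw [this]
      calc ‖Matrix.toEuclideanLin ((D - Dhat)ᵀ) x‖ ≤ ‖(D - Dhat)ᵀ‖ * ‖x‖ := le_opn _ x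
      _ = ‖D - Dhat‖ * ‖x‖ := by rw [transpose_opn]
      _ ≤ Δ * ‖x‖ := mul_le_mul_of_nonneg_right hΔD (norm_nonneg x)
    have hlow : σ / 2 * ‖x‖ ≤ ‖Matrix.toEuclideanLin Dhatᵀ x‖ := by
      have h1 := hDlow x
      have h2 := norm_sub_norm_le (Matrix.toEuclideanLin Dᵀ x) (Matrix.toEuclideanLin Dhatᵀ x)
      have h3 : Δ * ‖x‖ ≤ σ / 2 * ‖x‖ := mul_le_mul_of_nonneg_right hsmall (norm_nonneg x)
      have h4 := le_trans h2 hdiff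
      linarith
    have : (σ / 2 * ‖x‖) ^ 2 ≤ ‖Matrix.toEuclideanLin Dhatᵀ x‖ ^ 2 :=
      pow_le_pow_left₀ (by positivity) hlow 2
    calc (σ / 2) ^ 2 * ‖x‖ ^ 2 = (σ / 2 * ‖x‖) ^ 2 := by ring
    _ ≤ _ := this
  obtain ⟨c1, c2, c3, c4⟩ := core D σ hσpos hqD
  obtain ⟨e1, e2, e3, e4⟩ := core Dhat (σ / 2) (by positivity) hqDhat
  -- projection
  set P := pinv Dhat * Dhat with hP
  have hDDh : Dhat * pinv Dhat = 1 := by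
    rw [pinv, ← Matrix.mul_assoc]; exact e1
  have hPP : P * P = P := by
    rw [hP, Matrix.mul_assoc (pinv Dhat) Dhat (pinv Dhat * Dhat), ← Matrix.mul_assoc Dhat,
      hDDh, Matrix.one_mul]
  have hPsym : Pᵀ = P := by
    rw [hP, pinv, Matrix.transpose_mul, Matrix.transpose_mul, Matrix.transpose_nonsing_inv,
      Matrix.transpose_mul, Matrix.transpose_transpose, Matrix.mul_assoc]
  have hQsym : (1 - P)ᵀ = 1 - P := by
    rw [Matrix.transpose_sub, Matrix.transpose_one, hPsym]
  have hQQ : (1 - P) * (1 - P) = 1 - P := by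
    rw [Matrix.sub_mul, Matrix.one_mul, Matrix.mul_sub, Matrix.mul_one, hPP]
    abel
  have hQ : ‖(1 : Matrix (Fin p) (Fin p) ℝ) - P‖ ≤ 1 := proj_norm _ hQsym hQQ
  -- norms of pinv
  have hpinvD : ‖pinv D‖ ≤ 1 / σ := c4
  have hpinvDhat : ‖pinv Dhat‖ ≤ 1 / (σ / 2) := e4
  have hSi : ‖(D * Dᵀ)⁻¹‖ ≤ 1 / σ ^ 2 := c3
  -- identity
  rw [identity C Chat D Dhat c1 e1 e2]
  have hDhD : ‖Dhat - D‖ ≤ Δ := by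
    rw [show Dhat - D = -(D - Dhat) by abel, norm_neg]; exact hΔD
  have hChC : ‖Chat - C‖ ≤ Δ := by
    rw [show Chat - C = -(C - Chat) by abel, norm_neg]; exact hΔC
  have t1 : ‖(Chat - C) * pinv Dhat‖ ≤ Δ * (1 / (σ / 2)) := by
    calc ‖(Chat - C) * pinv Dhat‖ ≤ ‖Chat - C‖ * ‖pinv Dhat‖ := Matrix.l2_opNorm_mul _ _
    _ ≤ Δ * (1 / (σ / 2)) := by
        apply mul_le_mul hChC hpinvDhat (norm_nonneg _) hΔ0
  have t2a : ‖pinv Dhat * ((Dhat - D) * pinv D)‖ ≤ (1 / (σ / 2)) * (Δ * (1 / σ)) := by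
    calc ‖pinv Dhat * ((Dhat - D) * pinv D)‖
        ≤ ‖pinv Dhat‖ * ‖(Dhat - D) * pinv D‖ := Matrix.l2_opNorm_mul _ _
    _ ≤ (1 / (σ / 2)) * (Δ * (1 / σ)) := by
        apply mul_le_mul hpinvDhat ?_ (norm_nonneg _) (by positivity)
        calc ‖(Dhat - D) * pinv D‖ ≤ ‖Dhat - D‖ * ‖pinv D‖ := Matrix.l2_opNorm_mul _ _
        _ ≤ Δ * (1 / σ) := mul_le_mul hDhD hpinvD (norm_nonneg _) hΔ0
  have t2b : ‖(1 - P) * ((Dhat - D)ᵀ * (D * Dᵀ)⁻¹)‖ ≤ 1 * (Δ * (1 / σ ^ 2)) := by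
    calc ‖(1 - P) * ((Dhat - D)ᵀ * (D * Dᵀ)⁻¹)‖
        ≤ ‖(1 : Matrix (Fin p) (Fin p) ℝ) - P‖ * ‖(Dhat - D)ᵀ * (D * Dᵀ)⁻¹‖ :=
          Matrix.l2_opNorm_mul _ _
    _ ≤ 1 * (Δ * (1 / σ ^ 2)) := by
        apply mul_le_mul hQ ?_ (norm_nonneg _) zero_le_one
        calc ‖(Dhat - D)ᵀ * (D * Dᵀ)⁻¹‖ ≤ ‖(Dhat - D)ᵀ‖ * ‖(D * Dᵀ)⁻¹‖ :=
              Matrix.l2_opNorm_mul _ _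
        _ ≤ Δ * (1 / σ ^ 2) := by
            rw [transpose_opn]
            exact mul_le_mul hDhD hSi (norm_nonneg _) hΔ0
  have t2 : ‖C * (-(pinv Dhat * ((Dhat - D) * pinv D))
        + (1 - P) * ((Dhat - D)ᵀ * (D * Dᵀ)⁻¹))‖
      ≤ M * ((1 / (σ / 2)) * (Δ * (1 / σ)) + 1 * (Δ * (1 / σ ^ 2))) := by
    calc ‖C * (-(pinv Dhat * ((Dhat - D) * pinv D))
        + (1 - P) * ((Dhat - D)ᵀ * (D * Dᵀ)⁻¹))‖
        ≤ ‖C‖ * ‖-(pinv Dhat * ((Dhat - D) * pinv D))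
            + (1 - P) * ((Dhat - D)ᵀ * (D * Dᵀ)⁻¹)‖ := Matrix.l2_opNorm_mul _ _
    _ ≤ M * ((1 / (σ / 2)) * (Δ * (1 / σ)) + 1 * (Δ * (1 / σ ^ 2))) := by
        apply mul_le_mul hCM ?_ (norm_nonneg _) hM0
        calc ‖-(pinv Dhat * ((Dhat - D) * pinv D))
            + (1 - P) * ((Dhat - D)ᵀ * (D * Dᵀ)⁻¹)‖
            ≤ ‖-(pinv Dhat * ((Dhat - D) * pinv D))‖
              + ‖(1 - P) * ((Dhat - D)ᵀ * (D * Dᵀ)⁻¹)‖ := norm_add_le _ _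
        _ ≤ (1 / (σ / 2)) * (Δ * (1 / σ)) + 1 * (Δ * (1 / σ ^ 2)) := by
            rw [norm_neg]
            exact add_le_add t2a t2b
  calc ‖(Chat - C) * pinv Dhat
      + C * (-(pinv Dhat * ((Dhat - D) * pinv D))
        + (1 - P) * ((Dhat - D)ᵀ * (D * Dᵀ)⁻¹))‖
      ≤ ‖(Chat - C) * pinv Dhat‖
        + ‖C * (-(pinv Dhat * ((Dhat - D) * pinv D))
          + (1 - P) * ((Dhat - D)ᵀ * (D * Dᵀ)⁻¹))‖ := norm_add_le _ _
  _ ≤ Δ * (1 / (σ / 2)) + M * ((1 / (σ / 2)) * (Δ * (1 / σ)) + 1 * (Δ * (1 / σ ^ 2))) :=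
      add_le_add t1 t2
  _ ≤ 6 * Δ * M / σ ^ 2 := by
      have hσne : σ ≠ 0 := ne_of_gt hσpos
      have heq : Δ * (1 / (σ / 2)) + M * ((1 / (σ / 2)) * (Δ * (1 / σ)) + 1 * (Δ * (1 / σ ^ 2)))
          = (2 * Δ * σ + 3 * Δ * M) / σ ^ 2 := by
        field_simp
        ring
      rw [heq, show 6 * Δ * M / σ ^ 2 = (6 * Δ * M) / σ ^ 2 by ring,
        div_le_div_iff_of_pos_right (by positivity)]
      nlinarith [mul_nonneg hΔ0 (sub_nonneg.mpr hσM), mul_nonneg hΔ0 hσpos.le]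

end Aux

/-- Least-squares perturbation: if `A = C D†` with `D` of full row rank and smallest singular
value at least `σ > 0` (i.e. `D Dᵀ ⪰ σ² I`), and if
`Δ = max{‖C − Ĉ‖, ‖D − D̂‖} ≤ σ/2`, then `Â = Ĉ D̂†` satisfies
`‖Â − A‖_op ≤ 6 Δ M σ⁻²` where `M = max{‖C‖, ‖D‖}`. -/
theorem pseudoinverse_perturbation {nr d p : ℕ}
    (C Chat : Matrix (Fin nr) (Fin p) ℝ) (D Dhat : Matrix (Fin d) (Fin p) ℝ)
    (σ Δ M : ℝ) (hσpos : 0 < σ)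
    (hσ : (D * Dᵀ - σ ^ 2 • (1 : Matrix (Fin d) (Fin d) ℝ)).PosSemidef)
    (hΔ : Δ = max (opNorm (C - Chat)) (opNorm (D - Dhat)))
    (hM : M = max (opNorm C) (opNorm D))
    (hsmall : Δ ≤ σ / 2) :
    opNorm (Chat * pinv Dhat - C * pinv D) ≤ 6 * Δ * M / σ ^ 2 := by
  exact main_bound C Chat D Dhat σ Δ M hσpos hσ hΔ hM hsmall
end
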